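/- Let (v_j)_{j∈ℤ} be a sequence in ℝ^m, (ψ_j)_{j∈ℤ} a sequence in ℝ, and (f_{j+1/2})_{j∈ℤ} a sequence in ℝ^m satisfying the entropy conservation relation ⟨v_{j+1} - v_j, f_{j+1/2}⟩ = ψ_{j+1} - ψ_j for all j. Then for every j one has the telescoping identity ⟨v_j, f_{j+1/2} - f_{j-1/2}⟩ = q̃_{j+1/2} - q̃_{j-1/2}, where q̃_{j+1/2} = ⟨(v_j + v_{j+1})/2, f_{j+1/2}⟩ - (ψ_j + ψ_{j+1})/2. -/
import Mathlib


open Matrix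

/-- **Tadmor's lemma.** If a sequence of interface fluxes `f j` (representing
`f_{j+1/2}`) satisfies the entropy conservation relation
`⟨v_{j+1} - v_j, f_{j+1/2}⟩ = ψ_{j+1} - ψ_j`, then
`⟨v_j, f_{j+1/2} - f_{j-1/2}⟩ = q̃_{j+1/2} - q̃_{j-1/2}` with
`q̃_{j+1/2} = ⟨(v_j + v_{j+1})/2, f_{j+1/2}⟩ - (ψ_j + ψ_{j+1})/2`. -/
theorem tadmor_telescoping_identity (m : ℕ)
    (v : ℤ → (Fin m → ℝ)) (ψ : ℤ → ℝ) (f : ℤ → (Fin m → ℝ))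
    (hEC : ∀ j : ℤ, (v (j + 1) - v j) ⬝ᵥ f j = ψ (j + 1) - ψ j)
    (qt : ℤ → ℝ)
    (hqt : ∀ j : ℤ, qt j = ((1 / 2 : ℝ) • (v j + v (j + 1))) ⬝ᵥ f j - (ψ j + ψ (j + 1)) / 2) :
    ∀ j : ℤ, v j ⬝ᵥ (f j - f (j - 1)) = qt j - qt (j - 1) := by
  intro j
  have h1 := hEC j
  have h2 := hEC (j - 1)
  rw [sub_add_cancel] at h2
  rw [hqt j, hqt (j - 1), sub_add_cancel]
  simp only [dotProduct_sub, smul_dotProduct, add_dotProduct, sub_dotProduct, smul_eq_mul] at *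
  linarith
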